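/- Applying the Clifford process with parameter q = +1 (resp. q = -1) to the real Clifford algebra C(r,s) (with grading automorphism σ) yields an algebra isomorphic to C(r+1, s) (resp. C(r, s+1)). -/

import Mathlib

open CliffordAlgebra

/-- The diagonal quadratic form of signature `(r, s)`: the first `r` weights are `+1`
and the remaining `s` weights are `-1`. -/
noncomputable def sigQF (k : Type*) [Field k] (r s : ℕ) :
    QuadraticForm k (Fin (r + s) → k) :=
  QuadraticMap.weightedSumSquares k (fun i : Fin (r + s) => if (i : ℕ) < r then (1 : k) else -1)

/-- The Clifford-process product on `Ā = A ⊕ Av` with `v² = q`, `va = σ(a)v`. -/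
def cpMul {k A : Type*} [Field k] [Ring A] [Module k A]
    [SMulCommClass k A A] [IsScalarTower k A A]
    (q : k) (σ : A → A) (p r : A × A) : A × A :=
  (p.1 * r.1 + q • (p.2 * σ r.2), p.1 * r.2 + p.2 * σ r.1)

set_option maxHeartbeats 1000000

namespace CPproof



variable {k : Type*} [Field k] {n : ℕ}

theorem insertNth_smul (p : Fin (n + 1)) (c x : k) (u : Fin n → k) :
    p.insertNth (α := fun _ => k) (c * x) (c • u) = c • p.insertNth (α := fun _ => k) x u := by
  refine Fin.insertNth_eq_iff.2 ⟨?_, ?_⟩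
  · simp [Fin.insertNth_apply_same, smul_eq_mul]
  · funext j
    simp [Fin.removeNth, Fin.insertNth_apply_succAbove]

/-- insert a `0` at position `p`, as a linear map. -/
def insL (p : Fin (n + 1)) : (Fin n → k) →ₗ[k] (Fin (n + 1) → k) where
  toFun x := p.insertNth 0 x
  map_add' u v := by rw [← Fin.insertNth_add, add_zero]
  map_smul' c u := by rw [RingHom.id_apply, ← CPproof.insertNth_smul, mul_zero]

theorem wss_insertNth (w : Fin n → k) (w' : Fin (n + 1) → k) (p : Fin (n + 1))
    (hw : ∀ i, w' (p.succAbove i) = w i) (c : k) (x : Fin n → k) :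
    QuadraticMap.weightedSumSquares k w' (p.insertNth c x)
      = w' p * (c * c) + QuadraticMap.weightedSumSquares k w x := by
  rw [QuadraticMap.weightedSumSquares_apply, QuadraticMap.weightedSumSquares_apply,
    Fin.sum_univ_succAbove _ p]
  simp [hw, smul_eq_mul]

/-- the isometric embedding. -/
def gIso (w : Fin n → k) (w' : Fin (n + 1) → k) (p : Fin (n + 1))
    (hw : ∀ i, w' (p.succAbove i) = w i) :
    (QuadraticMap.weightedSumSquares k w : QuadraticForm k (Fin n → k)) →qᵢ
      (QuadraticMap.weightedSumSquares k w' : QuadraticForm k (Fin (n + 1) → k)) where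
  toLinearMap := insL p
  map_app' x := by
    show QuadraticMap.weightedSumSquares k w' (p.insertNth 0 x) = _
    rw [wss_insertNth w w' p hw]
    simp




variable {k V : Type*} [Field k] [AddCommGroup V] [Module k V]

/-- The Clifford process algebra `A ⊕ Av`. -/
@[ext]
structure CPA (Q : QuadraticForm k V) (q : k) : Type _ where
  fst : CliffordAlgebra Q
  snd : CliffordAlgebra Q

namespace CPA

variable {Q : QuadraticForm k V} {q : k}

instance : Add (CPA Q q) := ⟨fun x y => ⟨x.fst + y.fst, x.snd + y.snd⟩⟩
instance : Zero (CPA Q q) := ⟨⟨0, 0⟩⟩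
instance : Neg (CPA Q q) := ⟨fun x => ⟨-x.fst, -x.snd⟩⟩
instance : Sub (CPA Q q) := ⟨fun x y => ⟨x.fst - y.fst, x.snd - y.snd⟩⟩
instance {M : Type*} [SMul M (CliffordAlgebra Q)] : SMul M (CPA Q q) :=
  ⟨fun c x => ⟨c • x.fst, c • x.snd⟩⟩
instance : One (CPA Q q) := ⟨⟨1, 0⟩⟩
instance : Mul (CPA Q q) :=
  ⟨fun x y => ⟨x.fst * y.fst + q • (x.snd * involute y.snd),
    x.fst * y.snd + x.snd * involute y.fst⟩⟩

@[simp] theorem add_fst (x y : CPA Q q) : (x + y).fst = x.fst + y.fst := rfl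
@[simp] theorem add_snd (x y : CPA Q q) : (x + y).snd = x.snd + y.snd := rfl
@[simp] theorem zero_fst : (0 : CPA Q q).fst = 0 := rfl
@[simp] theorem zero_snd : (0 : CPA Q q).snd = 0 := rfl
@[simp] theorem neg_fst (x : CPA Q q) : (-x).fst = -x.fst := rfl
@[simp] theorem neg_snd (x : CPA Q q) : (-x).snd = -x.snd := rfl
@[simp] theorem sub_fst (x y : CPA Q q) : (x - y).fst = x.fst - y.fst := rfl
@[simp] theorem sub_snd (x y : CPA Q q) : (x - y).snd = x.snd - y.snd := rfl
@[simp] theorem smul_fst {M : Type*} [SMul M (CliffordAlgebra Q)] (c : M) (x : CPA Q q) :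
    (c • x).fst = c • x.fst := rfl
@[simp] theorem smul_snd {M : Type*} [SMul M (CliffordAlgebra Q)] (c : M) (x : CPA Q q) :
    (c • x).snd = c • x.snd := rfl
@[simp] theorem one_fst : (1 : CPA Q q).fst = 1 := rfl
@[simp] theorem one_snd : (1 : CPA Q q).snd = 0 := rfl
@[simp] theorem mul_fst (x y : CPA Q q) :
    (x * y).fst = x.fst * y.fst + q • (x.snd * involute y.snd) := rfl
@[simp] theorem mul_snd (x y : CPA Q q) :
    (x * y).snd = x.fst * y.snd + x.snd * involute y.fst := rfl
@[simp] theorem mk_fst (a b : CliffordAlgebra Q) : (CPA.mk (q := q) a b).fst = a := rfl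
@[simp] theorem mk_snd (a b : CliffordAlgebra Q) : (CPA.mk (q := q) a b).snd = b := rfl

theorem toProd_injective :
    Function.Injective (fun x : CPA Q q => (x.fst, x.snd)) := by
  intro x y h
  simp only [Prod.mk.injEq] at h
  exact CPA.ext h.1 h.2

instance : AddCommGroup (CPA Q q) :=
  Function.Injective.addCommGroup (fun x : CPA Q q => (x.fst, x.snd)) toProd_injective
    rfl (fun _ _ => rfl) (fun _ => rfl) (fun _ _ => rfl) (fun _ _ => rfl) (fun _ _ => rfl)

/-- the projection, as an `AddMonoidHom`. -/
def toProdHom : CPA Q q →+ CliffordAlgebra Q × CliffordAlgebra Q where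
  toFun x := (x.fst, x.snd)
  map_zero' := rfl
  map_add' _ _ := rfl

instance : Module k (CPA Q q) :=
  Function.Injective.module k toProdHom toProd_injective (fun _ _ => rfl)

instance : Ring (CPA Q q) where
  __ := (inferInstance : AddCommGroup (CPA Q q))
  left_distrib x y z := by ext <;> simp [mul_add, add_mul, smul_add, map_add] <;> abel
  right_distrib x y z := by ext <;> simp [mul_add, add_mul, smul_add, map_add] <;> abel
  zero_mul x := by ext <;> simp
  mul_zero x := by ext <;> simp
  mul_assoc x y z := by
    ext <;>
      simp [mul_add, add_mul, smul_add, map_add, map_mul, mul_smul_comm, smul_mul_assoc,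
        smul_smul, mul_assoc] <;>
      abel
  one_mul x := by ext <;> simp
  mul_one x := by ext <;> simp

instance : Algebra k (CPA Q q) :=
  Algebra.ofModule
    (fun c x y => by
      ext <;> simp [smul_mul_assoc, smul_add, smul_smul, mul_comm])
    (fun c x y => by
      ext <;> simp [mul_smul_comm, smul_add, smul_smul, mul_comm, map_smul])

theorem algebraMap_fst (c : k) :
    (algebraMap k (CPA Q q) c).fst = algebraMap k (CliffordAlgebra Q) c := by
  rw [Algebra.algebraMap_eq_smul_one, Algebra.algebraMap_eq_smul_one]; rfl

theorem algebraMap_snd (c : k) : (algebraMap k (CPA Q q) c).snd = 0 := by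
  rw [Algebra.algebraMap_eq_smul_one]; exact smul_zero c

/-- Left inclusion. -/
def inl : CliffordAlgebra Q →ₐ[k] CPA Q q :=
  AlgHom.ofLinearMap
    { toFun := fun a => ⟨a, 0⟩
      map_add' := fun a b => by ext <;> simp
      map_smul' := fun c a => by ext <;> simp }
    rfl
    (fun x y => by ext <;> simp)

@[simp] theorem inl_apply (a : CliffordAlgebra Q) : (inl a : CPA Q q) = ⟨a, 0⟩ := rfl

end CPA


section Main

variable {k : Type*} [Field k] {n : ℕ}

set_option maxHeartbeats 1000000 in
theorem main (w : Fin n → k) (w' : Fin (n + 1) → k) (p : Fin (n + 1))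
    (hw : ∀ i, w' (p.succAbove i) = w i) :
    ∃ φ : (CliffordAlgebra (QuadraticMap.weightedSumSquares k w) ×
        CliffordAlgebra (QuadraticMap.weightedSumSquares k w)) ≃ₗ[k]
        CliffordAlgebra (QuadraticMap.weightedSumSquares k w'),
      φ (1, 0) = 1 ∧
      ∀ pp u, φ (cpMul (w' p) (involute :
          CliffordAlgebra (QuadraticMap.weightedSumSquares k w) →
          CliffordAlgebra (QuadraticMap.weightedSumSquares k w)) pp u) = φ pp * φ u := by
  set Q : QuadraticForm k (Fin n → k) := QuadraticMap.weightedSumSquares k w with hQ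
  set Q' : QuadraticForm k (Fin (n + 1) → k) := QuadraticMap.weightedSumSquares k w' with hQ'
  set g : Q →qᵢ Q' := gIso w w' p hw with hg
  set f : CliffordAlgebra Q →ₐ[k] CliffordAlgebra Q' := CliffordAlgebra.map g with hf
  set e : Fin (n + 1) → k := p.insertNth 1 0 with he
  set v : CliffordAlgebra Q' := ι Q' e with hv
  have hQ'e : Q' e = w' p := by
    rw [hQ', he, wss_insertNth w w' p hw]; simp
  have hv2 : v * v = algebraMap k _ (w' p) := by rw [hv, ι_sq_scalar, hQ'e]
  have hgx : ∀ x, g x = p.insertNth (α := fun _ => k) 0 x := fun _ => rfl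
  have hortho : ∀ x : Fin n → k, Q'.IsOrtho e (g x) := by
    intro x
    have hadd : e + g x = p.insertNth (α := fun _ => k) 1 x := by
      rw [he, hgx, ← Fin.insertNth_add, add_zero, zero_add]
    rw [QuadraticMap.isOrtho_def, hadd, hQ'e, hgx, hQ', wss_insertNth w w' p hw,
      wss_insertNth w w' p hw]
    ring
  -- commutation relation
  have hcomm : ∀ a, v * f a = f (involute a) * v := by
    intro a
    induction a using CliffordAlgebra.induction with
    | algebraMap c => simp only [AlgHom.commutes]; rw [Algebra.commutes]
    | ι x =>
        rw [hf, map_apply_ι, involute_ι, map_neg, map_apply_ι, hv,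
          ι_mul_ι_comm_of_isOrtho (hortho x), neg_mul]
    | mul a b ha hb =>
        rw [map_mul, ← mul_assoc, ha, mul_assoc, hb, ← mul_assoc, ← map_mul, ← map_mul]
    | add a b ha hb => simp only [map_add, mul_add, add_mul, ha, hb]
  -- the generator map into the Clifford process algebra
  set q : k := w' p with hq
  have hremove : ∀ (m : Fin (n + 1) → k),
      p.insertNth (α := fun _ => k) (m p) (fun i => m (p.succAbove i)) = m :=
    fun m => (Fin.eq_insertNth_iff.2 ⟨rfl, rfl⟩).symm
  set ιCP : (Fin (n + 1) → k) →ₗ[k] CPA Q q :=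
    { toFun := fun m => ⟨ι Q (fun i => m (p.succAbove i)), algebraMap k _ (m p)⟩
      map_add' := fun a b => by
        ext
        · exact map_add (ι Q) _ _
        · exact map_add (algebraMap k (CliffordAlgebra Q)) (a p) (b p)
      map_smul' := fun c a => by
        simp only [RingHom.id_apply]
        ext
        · exact map_smul (ι Q) c _
        · simp only [CPA.smul_snd, CPA.mk_snd]
          rw [Pi.smul_apply, smul_eq_mul, map_mul, ← Algebra.smul_def] } with hιCP
  have hsq : ∀ m, ιCP m * ιCP m = algebraMap k (CPA Q q) (Q' m) := by
    intro m
    have hd : Q' m = Q (fun i => m (p.succAbove i)) + q * (m p * m p) := by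
      conv_lhs => rw [← hremove m]
      rw [hQ', wss_insertNth w w' p hw, hQ, hq]
      ring
    ext
    · simp only [hιCP, LinearMap.coe_mk, AddHom.coe_mk, CPA.mul_fst, CPA.mk_fst, CPA.mk_snd,
        CPA.algebraMap_fst]
      rw [ι_sq_scalar, AlgHom.commutes, ← map_mul, Algebra.smul_def, ← map_mul, ← map_add, hd]
    · simp only [hιCP, LinearMap.coe_mk, AddHom.coe_mk, CPA.mul_snd, CPA.mk_fst, CPA.mk_snd,
        CPA.algebraMap_snd, involute_ι, mul_neg]
      rw [Algebra.commutes, add_neg_cancel]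
  set F : CliffordAlgebra Q' →ₐ[k] CPA Q q := CliffordAlgebra.lift Q' ⟨ιCP, hsq⟩ with hF
  have hFι : ∀ m, F (ι Q' m) = ιCP m := fun m => by rw [hF, lift_ι_apply]
  -- the map the other way
  set φL : CPA Q q →ₗ[k] CliffordAlgebra Q' :=
    { toFun := fun x => f x.fst + f x.snd * v
      map_add' := fun a b => by
        simp only [CPA.add_fst, CPA.add_snd, map_add, add_mul]; abel
      map_smul' := fun c a => by
        simp only [CPA.smul_fst, CPA.smul_snd, map_smul, smul_mul_assoc, smul_add,
          RingHom.id_apply] } with hφL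
  have hφL_apply : ∀ x : CPA Q q, φL x = f x.fst + f x.snd * v := fun _ => rfl
  have hmul : ∀ x y : CPA Q q, φL (x * y) = φL x * φL y := by
    intro x y
    have h1 : f x.snd * v * f y.fst = f x.snd * f (involute y.fst) * v := by
      rw [mul_assoc, hcomm, ← mul_assoc]
    have h2 : f x.snd * v * (f y.snd * v) = q • (f x.snd * f (involute y.snd)) := by
      rw [mul_assoc, ← mul_assoc v, hcomm, mul_assoc, hv2, ← Algebra.commutes,
        ← Algebra.smul_def, mul_smul_comm]
    have key : (f x.fst + f x.snd * v) * (f y.fst + f y.snd * v)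
        = f x.fst * f y.fst + q • (f x.snd * f (involute y.snd))
          + (f x.fst * f y.snd + f x.snd * f (involute y.fst)) * v := by
      rw [mul_add, add_mul, add_mul, h1, h2, add_mul, ← mul_assoc (f x.fst) (f y.snd) v]
      abel
    rw [hφL_apply, hφL_apply, hφL_apply, CPA.mul_fst, CPA.mul_snd, key]
    simp only [map_add, map_mul, map_smul]
    try abel
  set φA : CPA Q q →ₐ[k] CliffordAlgebra Q' :=
    AlgHom.ofLinearMap φL (by rw [hφL_apply]; simp) hmul with hφA
  have hφAL : ∀ x, φA x = f x.fst + f x.snd * v := fun _ => rfl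
  -- F ∘ f = inl
  have hFf : ∀ a, F (f a) = CPA.inl (q := q) a := by
    have : F.comp f = CPA.inl (q := q) := by
      apply CliffordAlgebra.hom_ext
      apply LinearMap.ext
      intro x
      show F (f (ι Q x)) = CPA.inl (ι Q x)
      rw [hf, map_apply_ι, hFι, CPA.inl_apply]
      ext
      · simp only [hιCP, LinearMap.coe_mk, AddHom.coe_mk, CPA.mk_fst]
        congr 1
        funext i
        rw [hgx, Fin.insertNth_apply_succAbove]
      · simp only [hιCP, LinearMap.coe_mk, AddHom.coe_mk, CPA.mk_snd]
        rw [hgx]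
        simp [Fin.insertNth_apply_same]
    intro a
    exact DFunLike.congr_fun this a
  have hFv : F v = (⟨0, 1⟩ : CPA Q q) := by
    rw [hv, hFι]
    ext
    · simp only [hιCP, LinearMap.coe_mk, AddHom.coe_mk, CPA.mk_fst]
      have : (fun i => e (p.succAbove i)) = (0 : Fin n → k) := by
        funext i; rw [he, Fin.insertNth_apply_succAbove]; try rfl
      rw [this, map_zero]
    · simp only [hιCP, LinearMap.coe_mk, AddHom.coe_mk, CPA.mk_snd]
      rw [he, Fin.insertNth_apply_same, map_one]
  -- the two composition identities
  have hcomp1 : φA.comp F = AlgHom.id k (CliffordAlgebra Q') := by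
    apply CliffordAlgebra.hom_ext
    apply LinearMap.ext
    intro m
    show φA (F (ι Q' m)) = ι Q' m
    rw [hFι, hιCP]
    rw [show ιCP m = (⟨ι Q (fun i => m (p.succAbove i)), algebraMap k _ (m p)⟩ : CPA Q q)
      from rfl]
    rw [hφAL]
    simp only [CPA.mk_fst, CPA.mk_snd]
    rw [hf, map_apply_ι, AlgHom.commutes, ← Algebra.smul_def]
    conv_rhs => rw [← hremove m]
    have hsplit : p.insertNth (α := fun _ => k) (m p) (fun i => m (p.succAbove i))
        = g (fun i => m (p.succAbove i)) + m p • e := by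
      rw [hgx, he, ← insertNth_smul, ← Fin.insertNth_add]
      simp only [zero_add, mul_one, smul_zero, add_zero]
    rw [hsplit, map_add, map_smul, ← hv]
  have hcomp2 : F.comp φA = AlgHom.id k (CPA Q q) := by
    apply AlgHom.ext
    intro x
    show F (φA x) = x
    rw [hφAL, map_add, map_mul, hFf, hFf, hFv]
    ext <;> simp
  set E : CPA Q q ≃ₐ[k] CliffordAlgebra Q' := AlgEquiv.ofAlgHom φA F hcomp1 hcomp2 with hE
  have hE_apply : ∀ x, E x = φA x := fun _ => rfl
  -- assemble
  set prodLE : (CliffordAlgebra Q × CliffordAlgebra Q) ≃ₗ[k] CPA Q q :=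
    { toFun := fun x => ⟨x.1, x.2⟩
      invFun := fun x => (x.fst, x.snd)
      map_add' := fun _ _ => rfl
      map_smul' := fun _ _ => rfl
      left_inv := fun _ => rfl
      right_inv := fun _ => rfl } with hprod
  refine ⟨prodLE.trans E.toLinearEquiv, ?_, ?_⟩
  · show E (⟨1, 0⟩ : CPA Q q) = 1
    rw [hE_apply, hφAL]
    simp
  · intro pp u
    show E (prodLE (cpMul q involute pp u)) = E (prodLE pp) * E (prodLE u)
    have : prodLE (cpMul q involute pp u) = prodLE pp * prodLE u := rfl
    rw [this, map_mul]

end Main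
end CPproof

/-- applying the Clifford process with parameter `q = +1`
(resp. `q = -1`) to `C(r,s)`, using the parity (grading) automorphism `σ`, yields an
algebra isomorphic to `C(r+1, s)` (resp. `C(r, s+1)`): there are unital linear
bijections intertwining the Clifford-process product with the Clifford product. -/
theorem clifford_process_signature {k : Type*} [Field k] (hk : (2 : k) ≠ 0) (r s : ℕ) :
    (∃ φ : (CliffordAlgebra (sigQF k r s) × CliffordAlgebra (sigQF k r s)) ≃ₗ[k]
        CliffordAlgebra (sigQF k (r + 1) s),
      φ ((1 : CliffordAlgebra (sigQF k r s)), 0) = 1 ∧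
      ∀ p u, φ (cpMul (1 : k) (involute : CliffordAlgebra (sigQF k r s) →
          CliffordAlgebra (sigQF k r s)) p u) = φ p * φ u) ∧
    (∃ ψ : (CliffordAlgebra (sigQF k r s) × CliffordAlgebra (sigQF k r s)) ≃ₗ[k]
        CliffordAlgebra (sigQF k r (s + 1)),
      ψ ((1 : CliffordAlgebra (sigQF k r s)), 0) = 1 ∧
      ∀ p u, ψ (cpMul (-1 : k) (involute : CliffordAlgebra (sigQF k r s) →
          CliffordAlgebra (sigQF k r s)) p u) = ψ p * ψ u) := by
  set n := r + s with hn
  set w : Fin n → k := fun i => if (i : ℕ) < r then (1 : k) else -1 with hwdef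
  constructor
  · -- q = +1 case
    set p1 : Fin (n + 1) := ⟨r, by omega⟩ with hp1def
    set w1 : Fin (n + 1) → k := fun j => if (j : ℕ) < r + 1 then (1 : k) else -1 with hw1def
    have hw1 : ∀ i : Fin n, w1 (p1.succAbove i) = w i := by
      intro i
      have hval : ((p1.succAbove i : Fin (n + 1)) : ℕ)
          = if (i : ℕ) < r then (i : ℕ) else (i : ℕ) + 1 := by
        rw [Fin.succAbove]
        split_ifs with h h' h'
        · rfl
        · exact absurd (by simpa [Fin.lt_def] using h) h'
        · exact absurd (by simpa [Fin.lt_def] using h') h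
        · rfl
      show (if ((p1.succAbove i : Fin (n + 1)) : ℕ) < r + 1 then (1 : k) else -1)
        = if (i : ℕ) < r then (1 : k) else -1
      rw [hval]
      split_ifs with h1 h2 h2 <;> first | rfl | omega
    obtain ⟨φ, hφ1, hφm⟩ := CPproof.main w w1 p1 hw1
    have hq1 : w1 p1 = 1 := if_pos (show ((p1 : Fin (n + 1)) : ℕ) < r + 1 from Nat.lt_succ_self r)
    rw [hq1] at hφm
    -- transport along the reindexing isometry
    have hnn : r + 1 + s = n + 1 := by omega
    have hiso : (QuadraticMap.weightedSumSquares k w1 :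
        QuadraticForm k (Fin (n + 1) → k)).IsometryEquiv (sigQF k (r + 1) s) := by
      refine ⟨LinearEquiv.funCongrLeft k k (finCongr hnn), fun m => ?_⟩
      show QuadraticMap.weightedSumSquares k
          (fun i : Fin (r + 1 + s) => if (i : ℕ) < r + 1 then (1 : k) else -1)
          (m ∘ finCongr hnn) = QuadraticMap.weightedSumSquares k w1 m
      rw [QuadraticMap.weightedSumSquares_apply, QuadraticMap.weightedSumSquares_apply]
      refine Fintype.sum_equiv (finCongr hnn) _ _ (fun j => ?_)
      simp only [hw1def, finCongr_apply, Fin.coe_cast, smul_eq_mul,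
        LinearEquiv.funCongrLeft_apply, LinearMap.funLeft_apply, LinearEquiv.coe_coe,
        LinearMap.coe_mk, AddHom.coe_mk, Function.comp_apply]
      try split_ifs <;> ring
    set E2 := CliffordAlgebra.equivOfIsometry hiso with hE2
    refine ⟨φ.trans E2.toLinearEquiv, ?_, ?_⟩
    · show E2 (φ (1, 0)) = 1
      rw [hφ1, map_one]
    · intro pp u
      exact (congrArg E2 (hφm pp u)).trans (map_mul E2 _ _)
  · -- q = -1 case
    set w2 : Fin (n + 1) → k := fun j => if (j : ℕ) < r then (1 : k) else -1 with hw2def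
    have hw2 : ∀ i : Fin n, w2 ((Fin.last n).succAbove i) = w i := by
      intro i
      rw [Fin.succAbove_last]
      rfl
    obtain ⟨ψ, hψ1, hψm⟩ := CPproof.main w w2 (Fin.last n) hw2
    have hq2 : w2 (Fin.last n) = -1 := if_neg (by simp [Fin.last]; omega)
    rw [hq2] at hψm
    exact ⟨ψ, hψ1, hψm⟩
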